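/- Sum of partial derivatives of the V-mapping at γ = 0 equals one minus the outside probability: for the mapping Φ_{i₂}^{V,0}(V) = log(1 + Σ_j S_j exp(μ_{i₂j})/(Σ_i w_i exp(μ_{ij}−V_i))), one has Σ_{i₁∈I} |∂Φ_{i₂}^{V,0}(V)/∂V_{i₁}| = Σ_{i₁∈I} ∂Φ_{i₂}^{V,0}(V)/∂V_{i₁} = T_{i₂}(V)/(1 + T_{i₂}(V)) < 1, where T_{i₂}(V) = Σ_j S_j exp(μ_{i₂j})/(Σ_i w_i exp(μ_{ij}−V_i)); in particular the mapping Φ^{V,0} is nonexpansive in the sup norm on any set where sup_{i₂,V} T_{i₂}(V)/(1+T_{i₂}(V)) < 1. -/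

import Mathlib

open Real Finset

lemma aux19 {I J : Type*} [Fintype I] [Fintype J] [Nonempty I] [DecidableEq I]
    (w : I → ℝ) (μ : I → J → ℝ) (S : J → ℝ)
    (hw : ∀ i, 0 < w i) (hS : ∀ j, 0 < S j) (V : I → ℝ) (i₂ : I) :
    ∃ L : (I → ℝ) →L[ℝ] ℝ,
      HasFDerivAt (fun V' : I → ℝ =>
        Real.log (1 + ∑ j, S j * Real.exp (μ i₂ j) / (∑ i, w i * Real.exp (μ i j - V' i)))) L V ∧
      ∀ h : I → ℝ, L h = ∑ i₁,
        ((∑ j, S j * Real.exp (μ i₂ j) * (w i₁ * Real.exp (μ i₁ j - V i₁)) /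
            (∑ i, w i * Real.exp (μ i j - V i)) ^ 2) /
          (1 + ∑ j, S j * Real.exp (μ i₂ j) / (∑ i, w i * Real.exp (μ i j - V i)))) * h i₁ := by
  have hDpos : ∀ j, 0 < ∑ i, w i * Real.exp (μ i j - V i) := fun j =>
    Finset.sum_pos (fun i _ => mul_pos (hw i) (Real.exp_pos _)) univ_nonempty
  have hTnn : 0 ≤ ∑ j, S j * Real.exp (μ i₂ j) / (∑ i, w i * Real.exp (μ i j - V i)) :=
    Finset.sum_nonneg fun j _ => div_nonneg (mul_pos (hS j) (Real.exp_pos _)).le (hDpos j).le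
  have hQpos : 0 < 1 + ∑ j, S j * Real.exp (μ i₂ j) / (∑ i, w i * Real.exp (μ i j - V i)) := by
    linarith
  have hD : ∀ j, HasFDerivAt (fun V' : I → ℝ => ∑ i, w i * Real.exp (μ i j - V' i))
      (∑ i, w i • (Real.exp (μ i j - V i) • ((0 : (I → ℝ) →L[ℝ] ℝ) - ContinuousLinearMap.proj i))) V :=
    fun j => HasFDerivAt.fun_sum fun i _ =>
      (((hasFDerivAt_const (μ i j) V).sub (hasFDerivAt_apply i V)).exp.const_mul (w i))
  have hDinv : ∀ j, HasFDerivAt (fun V' : I → ℝ => (∑ i, w i * Real.exp (μ i j - V' i))⁻¹)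
      ((-((∑ i, w i * Real.exp (μ i j - V i)) ^ 2)⁻¹) •
        (∑ i, w i • (Real.exp (μ i j - V i) • ((0 : (I → ℝ) →L[ℝ] ℝ) - ContinuousLinearMap.proj i)))) V :=
    fun j => (hasDerivAt_inv (hDpos j).ne').comp_hasFDerivAt V (hD j)
  have hT' : HasFDerivAt (fun V' : I → ℝ =>
      ∑ j, S j * Real.exp (μ i₂ j) / (∑ i, w i * Real.exp (μ i j - V' i)))
      (∑ j, (S j * Real.exp (μ i₂ j)) •
        ((-((∑ i, w i * Real.exp (μ i j - V i)) ^ 2)⁻¹) •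
          (∑ i, w i • (Real.exp (μ i j - V i) • ((0 : (I → ℝ) →L[ℝ] ℝ) - ContinuousLinearMap.proj i))))) V := by
    simp only [div_eq_mul_inv]
    exact HasFDerivAt.fun_sum fun j _ => (hDinv j).const_mul _
  have hlog := ((hasFDerivAt_const (1 : ℝ) V).add hT').log hQpos.ne'
  refine ⟨_, hlog, fun h => ?_⟩
  simp only [ContinuousLinearMap.coe_smul', Pi.smul_apply, ContinuousLinearMap.add_apply,
    ContinuousLinearMap.zero_apply, ContinuousLinearMap.coe_sum', Finset.sum_apply,
    ContinuousLinearMap.coe_sub', Pi.sub_apply, ContinuousLinearMap.proj_apply,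
    smul_eq_mul, zero_add, zero_sub, ContinuousLinearMap.neg_apply]
  conv_rhs => simp only [Finset.sum_div, Finset.sum_mul]
  conv_rhs => rw [Finset.sum_comm]
  simp only [Finset.mul_sum]
  refine Finset.sum_congr rfl fun j _ => ?_
  refine Finset.sum_congr rfl fun i _ => ?_
  have h1 := (hDpos j).ne'
  have h2 := hQpos.ne'
  simp only [Pi.add_apply, ← div_eq_mul_inv]
  field_simp
open Real Finset

theorem stmt19 {I J : Type*} [Fintype I] [Fintype J] [Nonempty I] [Nonempty J]
    [DecidableEq I]
    (w : I → ℝ) (μ : I → J → ℝ) (S : J → ℝ)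
    (hw : ∀ i, 0 < w i) (hS : ∀ j, 0 < S j)
    (T : I → (I → ℝ) → ℝ)
    (hT : ∀ i₂ V, T i₂ V =
      ∑ j, S j * Real.exp (μ i₂ j) / (∑ i, w i * Real.exp (μ i j - V i))) :
    (∀ (V : I → ℝ) (i₂ : I),
      ∑ i₁, |fderiv ℝ (fun V' => Real.log (1 + T i₂ V')) V (Pi.single i₁ 1)|
        = ∑ i₁, fderiv ℝ (fun V' => Real.log (1 + T i₂ V')) V (Pi.single i₁ 1)) ∧
    (∀ (V : I → ℝ) (i₂ : I),
      ∑ i₁, fderiv ℝ (fun V' => Real.log (1 + T i₂ V')) V (Pi.single i₁ 1)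
        = T i₂ V / (1 + T i₂ V)) ∧
    (∀ (V : I → ℝ) (i₂ : I), T i₂ V / (1 + T i₂ V) < 1) ∧
    (∀ c : ℝ, c < 1 → (∀ (i₂ : I) (V : I → ℝ), T i₂ V / (1 + T i₂ V) ≤ c) →
      ∀ V₁ V₂ : I → ℝ,
        ‖(fun i₂ => Real.log (1 + T i₂ V₁)) - (fun i₂ => Real.log (1 + T i₂ V₂))‖
          ≤ ‖V₁ - V₂‖) := by
  have hDpos : ∀ (V : I → ℝ) (j : J), 0 < ∑ i, w i * Real.exp (μ i j - V i) := fun V j =>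
    Finset.sum_pos (fun i _ => mul_pos (hw i) (Real.exp_pos _)) univ_nonempty
  have hTnn : ∀ i₂ V, 0 ≤ T i₂ V := fun i₂ V => by
    rw [hT]
    exact Finset.sum_nonneg fun j _ =>
      div_nonneg (mul_pos (hS j) (Real.exp_pos _)).le (hDpos V j).le
  have hQpos : ∀ i₂ V, 0 < 1 + T i₂ V := fun i₂ V => by linarith [hTnn i₂ V]
  choose L hL hLval using fun (V : I → ℝ) (i₂ : I) => aux19 w μ S hw hS V i₂
  have hfun : ∀ i₂ : I, (fun V' => Real.log (1 + T i₂ V')) =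
      (fun V' : I → ℝ =>
        Real.log (1 + ∑ j, S j * Real.exp (μ i₂ j) / (∑ i, w i * Real.exp (μ i j - V' i)))) :=
    fun i₂ => funext fun V' => by rw [hT]
  set A : (I → ℝ) → I → I → ℝ := fun V i₂ i₁ =>
    (∑ j, S j * Real.exp (μ i₂ j) * (w i₁ * Real.exp (μ i₁ j - V i₁)) /
        (∑ i, w i * Real.exp (μ i j - V i)) ^ 2) /
      (1 + ∑ j, S j * Real.exp (μ i₂ j) / (∑ i, w i * Real.exp (μ i j - V i))) with hA
  have hAnn : ∀ V i₂ i₁, 0 ≤ A V i₂ i₁ := by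
    intro V i₂ i₁
    apply div_nonneg
    · exact Finset.sum_nonneg fun j _ => div_nonneg
        (mul_nonneg (mul_pos (hS j) (Real.exp_pos _)).le
          (mul_pos (hw i₁) (Real.exp_pos _)).le) (by positivity)
    · have := hQpos i₂ V; rw [hT] at this; linarith
  have hAsum : ∀ V i₂, ∑ i₁, A V i₂ i₁ = T i₂ V / (1 + T i₂ V) := by
    intro V i₂
    rw [hT]
    simp only [hA]
    rw [← Finset.sum_div]
    congr 1
    rw [Finset.sum_comm]
    refine Finset.sum_congr rfl fun j _ => ?_
    rw [← Finset.sum_div, ← Finset.mul_sum, sq]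
    have hne := (hDpos V j).ne'
    field_simp
  have hfd : ∀ (V : I → ℝ) (i₂ i₁ : I),
      fderiv ℝ (fun V' => Real.log (1 + T i₂ V')) V (Pi.single i₁ 1) = A V i₂ i₁ := by
    intro V i₂ i₁
    rw [hfun i₂, (hL V i₂).fderiv, hLval]
    simp [Pi.single_apply, mul_ite]
    rfl
  refine ⟨?_, ?_, ?_, ?_⟩
  · intro V i₂
    refine Finset.sum_congr rfl fun i₁ _ => ?_
    rw [hfd, abs_of_nonneg (hAnn V i₂ i₁)]
  · intro V i₂
    simp only [hfd]
    exact hAsum V i₂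
  · intro V i₂
    rw [div_lt_one (hQpos i₂ V)]
    linarith [hTnn i₂ V]
  · intro c hc hbound V₁ V₂
    have hLnorm : ∀ V : I → ℝ, ‖ContinuousLinearMap.pi (fun i₂ => L V i₂)‖ ≤ 1 := by
      intro V
      refine ContinuousLinearMap.opNorm_le_bound _ zero_le_one fun h => ?_
      rw [one_mul]
      rw [pi_norm_le_iff_of_nonneg (norm_nonneg h)]
      intro i₂
      simp only [ContinuousLinearMap.pi_apply]
      rw [Real.norm_eq_abs, hLval]
      calc |∑ i₁, A V i₂ i₁ * h i₁| ≤ ∑ i₁, |A V i₂ i₁ * h i₁| :=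
            Finset.abs_sum_le_sum_abs _ _
        _ = ∑ i₁, A V i₂ i₁ * |h i₁| := by
            refine Finset.sum_congr rfl fun i₁ _ => ?_
            rw [abs_mul, abs_of_nonneg (hAnn V i₂ i₁)]
        _ ≤ ∑ i₁, A V i₂ i₁ * ‖h‖ := by
            refine Finset.sum_le_sum fun i₁ _ => ?_
            exact mul_le_mul_of_nonneg_left (by simpa using norm_le_pi_norm h i₁)
              (hAnn V i₂ i₁)
        _ = (T i₂ V / (1 + T i₂ V)) * ‖h‖ := by rw [← Finset.sum_mul, hAsum]
        _ ≤ 1 * ‖h‖ := by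
            apply mul_le_mul_of_nonneg_right _ (norm_nonneg h)
            rw [div_le_one (hQpos i₂ V)]
            linarith [hTnn i₂ V]
        _ = ‖h‖ := one_mul _
    have key := Convex.norm_image_sub_le_of_norm_hasFDerivWithin_le
      (f := fun V' : I → ℝ => fun i₂ : I =>
        Real.log (1 + ∑ j, S j * Real.exp (μ i₂ j) / (∑ i, w i * Real.exp (μ i j - V' i))))
      (f' := fun V => ContinuousLinearMap.pi (fun i₂ => L V i₂))
      (s := Set.univ) (C := 1)
      (fun x _ => (hasFDerivAt_pi.2 fun i₂ => hL x i₂).hasFDerivWithinAt)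
      (fun x _ => hLnorm x) convex_univ (Set.mem_univ V₂) (Set.mem_univ V₁)
    simp only [one_mul] at key
    have heq : (fun i₂ => Real.log (1 + T i₂ V₁)) - (fun i₂ => Real.log (1 + T i₂ V₂)) =
        (fun i₂ : I => Real.log (1 + ∑ j, S j * Real.exp (μ i₂ j) /
            (∑ i, w i * Real.exp (μ i j - V₁ i)))) -
          (fun i₂ : I => Real.log (1 + ∑ j, S j * Real.exp (μ i₂ j) /
            (∑ i, w i * Real.exp (μ i j - V₂ i)))) := by
      funext i₂; simp [hT]
    rw [heq]
    exact key
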